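/- The set K_exp := closure{(a₁,a₂,a₃) ∈ ℝ³ : a₃ ≤ a₂ · ln(a₁/a₂), a₁ > 0, a₂ > 0} equals the union of {(a₁,a₂,a₃) : a₃ ≤ a₂·ln(a₁/a₂), a₁ > 0, a₂ > 0} and {(a₁,0,a₃) : a₁ ≥ 0, a₃ ≤ 0}. -/

import Mathlib

open Real Filter Topology

/-- The closure of `{(a₁,a₂,a₃) : a₃ ≤ a₂ ln(a₁/a₂), a₁ > 0, a₂ > 0}` equals the union of
that set with `{(a₁,0,a₃) : a₁ ≥ 0, a₃ ≤ 0}`. -/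
theorem Kexp_closure_eq :
    closure {p : ℝ × ℝ × ℝ | p.2.2 ≤ p.2.1 * Real.log (p.1 / p.2.1) ∧ 0 < p.1 ∧ 0 < p.2.1} =
      {p : ℝ × ℝ × ℝ | p.2.2 ≤ p.2.1 * Real.log (p.1 / p.2.1) ∧ 0 < p.1 ∧ 0 < p.2.1} ∪
      {p : ℝ × ℝ × ℝ | p.2.1 = 0 ∧ 0 ≤ p.1 ∧ p.2.2 ≤ 0} := by
  apply Set.Subset.antisymm
  · intro p hp
    obtain ⟨u, hu, hlim⟩ := mem_closure_iff_seq_limit.mp hp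
    have hx : Tendsto (fun n => (u n).1) atTop (𝓝 p.1) :=
      (continuous_fst.tendsto p).comp hlim
    have hy : Tendsto (fun n => (u n).2.1) atTop (𝓝 p.2.1) :=
      (continuous_snd.fst.tendsto p).comp hlim
    have hz : Tendsto (fun n => (u n).2.2) atTop (𝓝 p.2.2) :=
      (continuous_snd.snd.tendsto p).comp hlim
    have hx0 : 0 ≤ p.1 := ge_of_tendsto' hx fun n => (hu n).2.1.le
    have hy0 : 0 ≤ p.2.1 := ge_of_tendsto' hy fun n => (hu n).2.2.le
    rcases eq_or_lt_of_le hy0 with hyeq | hypos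
    · right
      refine ⟨hyeq.symm, hx0, ?_⟩
      have hyy : Tendsto (fun n => (u n).2.1 * Real.log (u n).2.1) atTop (𝓝 0) := by
        have := (Real.continuous_mul_log.tendsto p.2.1).comp hy
        rw [← hyeq] at this
        simpa [Function.comp_def] using this
      have hbnd : ∀ n, (u n).2.2 ≤
          (u n).2.1 * Real.log (u n).1 - (u n).2.1 * Real.log (u n).2.1 := by
        intro n
        have h := (hu n).1
        rw [Real.log_div (hu n).2.1.ne' (hu n).2.2.ne', mul_sub] at h
        exact h
      rcases eq_or_lt_of_le hx0 with hxeq | hxpos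
      · -- p.1 = 0
        have h1 : ∀ᶠ n in atTop, (u n).1 < 1 := by
          apply hx.eventually_lt_const
          rw [← hxeq]; norm_num
        have hev : ∀ᶠ n in atTop,
            (u n).2.2 ≤ -((u n).2.1 * Real.log (u n).2.1) := by
          filter_upwards [h1] with n hn
          have hlog : Real.log (u n).1 ≤ 0 := Real.log_nonpos (hu n).2.1.le hn.le
          have : (u n).2.1 * Real.log (u n).1 ≤ 0 :=
            mul_nonpos_of_nonneg_of_nonpos (hu n).2.2.le hlog
          linarith [hbnd n]
        have := le_of_tendsto_of_tendsto hz hyy.neg hev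
        simpa using this
      · -- p.1 > 0
        have hlx : Tendsto (fun n => (u n).2.1 * Real.log (u n).1) atTop (𝓝 0) := by
          have := (hy.mul (hx.log hxpos.ne'))
          rw [← hyeq] at this
          simpa using this
        have := le_of_tendsto_of_tendsto' hz (hlx.sub hyy) hbnd
        simpa using this
    · left
      have hxpos : 0 < p.1 := by
        rcases hx0.lt_or_eq with h | h
        · exact h
        · exfalso
          have hdiv : Tendsto (fun n => (u n).1 / (u n).2.1) atTop (𝓝[>] 0) := by
            apply tendsto_nhdsWithin_of_tendsto_nhds_of_eventually_within
            · have := hx.div hy hypos.ne'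
              rw [← h] at this
              simpa [Pi.div_def] using this
            · exact Eventually.of_forall fun n => div_pos (hu n).2.1 (hu n).2.2
          have hlogbot : Tendsto (fun n => Real.log ((u n).1 / (u n).2.1)) atTop atBot :=
            Real.tendsto_log_nhdsGT_zero.comp hdiv
          have hbot : Tendsto (fun n => (u n).2.1 * Real.log ((u n).1 / (u n).2.1))
              atTop atBot := hy.pos_mul_atBot hypos hlogbot
          have : Tendsto (fun n => (u n).2.2) atTop atBot :=
            tendsto_atBot_mono (fun n => (hu n).1) hbot
          exact not_tendsto_atBot_of_tendsto_nhds hz this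
      have hf : Tendsto (fun n => (u n).2.1 * Real.log ((u n).1 / (u n).2.1)) atTop
          (𝓝 (p.2.1 * Real.log (p.1 / p.2.1))) :=
        hy.mul ((hx.div hy hypos.ne').log (div_pos hxpos hypos).ne')
      exact ⟨le_of_tendsto_of_tendsto' hz hf fun n => (hu n).1, hxpos, hypos⟩
  · rintro p (hp | ⟨hy, hx0, hz0⟩)
    · exact subset_closure hp
    · apply mem_closure_iff_seq_limit.mpr
      refine ⟨fun n => (p.1 + 1 / ((n : ℝ) + 1), (1 / ((n : ℝ) + 1)) ^ 2, p.2.2), ?_, ?_⟩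
      · intro n
        have hε : (0 : ℝ) < 1 / ((n : ℝ) + 1) := by positivity
        have hε1 : 1 / ((n : ℝ) + 1) ≤ 1 := by
          rw [div_le_one (by positivity)]
          linarith [Nat.cast_nonneg (α := ℝ) n]
        refine ⟨?_, by linarith, by positivity⟩
        have hnum : (1 / ((n : ℝ) + 1)) ^ 2 ≤ p.1 + 1 / ((n : ℝ) + 1) := by nlinarith
        have h1 : (1 : ℝ) ≤ (p.1 + 1 / ((n : ℝ) + 1)) / (1 / ((n : ℝ) + 1)) ^ 2 :=
          (one_le_div (by positivity)).mpr hnum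
        calc p.2.2 ≤ 0 := hz0
          _ ≤ _ := mul_nonneg (by positivity) (Real.log_nonneg h1)
      · have h : Tendsto (fun n : ℕ => 1 / ((n : ℝ) + 1)) atTop (𝓝 0) :=
          tendsto_one_div_add_atTop_nhds_zero_nat
        have := (tendsto_const_nhds (x := p.1)).add h |>.prodMk_nhds
          (((h.pow 2)).prodMk_nhds (tendsto_const_nhds (x := p.2.2)))
        simp only [add_zero] at this
        have hp' : p = (p.1, (0:ℝ)^2, p.2.2) := by
          rw [Prod.ext_iff, Prod.ext_iff]
          exact ⟨rfl, by rw [hy]; norm_num, rfl⟩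
        rw [hp']
        exact this
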